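/- If f(z) = Σ_{n≥0} a_n z^n is holomorphic on the unit disk with |f(z)| ≤ 1, then Σ_{n≥0} |a_n| r^n ≤ 1 for all 0 ≤ r ≤ 1/3, and the constant 1/3 is optimal: for every r > 1/3 there exists such an f with Σ |a_n| r^n > 1. -/

import Mathlib

open Metric Complex

lemma bohr_coeff (a : ℕ → ℂ) (n : ℕ) :
    (FormalMultilinearSeries.ofScalars ℂ a).coeff n = a n := by
  show (FormalMultilinearSeries.ofScalars ℂ a n) (fun _ => (1:ℂ)) = a n
  rw [FormalMultilinearSeries.ofScalars_apply_eq]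
  simp

lemma bohr_hfps (f : ℂ → ℂ) (a : ℕ → ℂ)
    (hs : ∀ z ∈ ball (0 : ℂ) 1, HasSum (fun n : ℕ => a n * z ^ n) (f z)) :
    HasFPowerSeriesOnBall f (FormalMultilinearSeries.ofScalars ℂ a) 0 1 := by
  have hrad : (1 : ENNReal) ≤ (FormalMultilinearSeries.ofScalars ℂ a).radius := by
    refine ENNReal.le_of_forall_nnreal_lt (fun r hr => ?_)
    have hr1 : (r : ℝ) < 1 := by exact_mod_cast hr
    have hsum : Summable (fun n : ℕ => a n * (r : ℂ) ^ n) := by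
      refine (hs (r : ℂ) ?_).summable
      simpa using abs_lt.mpr ⟨by linarith [r.coe_nonneg], hr1⟩
    refine FormalMultilinearSeries.le_radius_of_summable _ ?_
    have := hsum.norm
    simpa [FormalMultilinearSeries.ofScalars_norm, bohr_coeff,
      _root_.abs_of_nonneg r.coe_nonneg] using this
  refine ⟨hrad, one_pos, fun {y} hy => ?_⟩
  have hy' : y ∈ ball (0 : ℂ) 1 := by
    rw [show ball (0:ℂ) 1 = ball 0 ((1:NNReal):ℝ) by simp, ← Metric.eball_coe]
    exact hy
  have := hs y hy'
  simp only [FormalMultilinearSeries.ofScalars_apply_eq, smul_eq_mul, bohr_coeff]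
  simpa [mul_comm] using this

lemma bohr_mobius_norm (t u : ℂ) (ht : ‖t‖ ≤ 1) (hu : ‖u‖ ≤ 1) :
    ‖u - t‖ ≤ ‖1 - (starRingEnd ℂ) t * u‖ := by
  have key : ∀ v : ℂ, ‖v‖ ≤ 1 → v.re ^ 2 + v.im ^ 2 ≤ 1 := by
    intro v hv
    have h1 : Complex.normSq v ≤ 1 := by
      rw [← Complex.sq_norm]
      have := norm_nonneg v
      nlinarith
    simpa [Complex.normSq_apply, sq] using h1
  have ht' := key t ht
  have hu' := key u hu
  have h1 : Complex.normSq (u - t) ≤ Complex.normSq (1 - (starRingEnd ℂ) t * u) := by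
    simp only [Complex.normSq_apply, Complex.sub_re, Complex.sub_im, Complex.one_re,
      Complex.one_im, Complex.mul_re, Complex.mul_im, Complex.conj_re, Complex.conj_im]
    nlinarith [mul_nonneg (sub_nonneg.2 ht') (sub_nonneg.2 hu')]
  calc ‖u - t‖ = Real.sqrt (Complex.normSq (u - t)) := by
        rw [Complex.norm_def]
    _ ≤ Real.sqrt (Complex.normSq (1 - (starRingEnd ℂ) t * u)) := Real.sqrt_le_sqrt h1
    _ = _ := by rw [Complex.norm_def]

lemma bohr_avg (f : ℂ → ℂ) (a : ℕ → ℂ) (n : ℕ) (hn : 1 ≤ n)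
    (hs : ∀ z ∈ ball (0 : ℂ) 1, HasSum (fun k : ℕ => a k * z ^ k) (f z)) :
    ∀ z ∈ ball (0 : ℂ) 1,
      HasSum (fun m : ℕ => a (n * m) * (z ^ n) ^ m)
        ((n : ℂ)⁻¹ * ∑ j ∈ Finset.range n, f (Complex.exp (2 * Real.pi * I / n) ^ j * z)) := by
  intro z hz
  set ω : ℂ := Complex.exp (2 * Real.pi * I / n) with hωdef
  have hω : IsPrimitiveRoot ω n := Complex.isPrimitiveRoot_exp n (by omega)
  have hncast : (n : ℂ) ≠ 0 := Nat.cast_ne_zero.mpr (by omega)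
  have hωabs : ∀ j : ℕ, ‖ω ^ j * z‖ = ‖z‖ := by
    intro j
    have : ‖ω‖ = 1 := by
      rw [hωdef, Complex.norm_exp]
      norm_num [Complex.div_re, Complex.mul_I_re]
    simp [norm_mul, this]
  have hz1 : ‖z‖ < 1 := by simpa using hz
  have hsum : HasSum (fun k : ℕ => (n : ℂ)⁻¹ * ∑ j ∈ Finset.range n, a k * (ω ^ j * z) ^ k)
      ((n : ℂ)⁻¹ * ∑ j ∈ Finset.range n, f (ω ^ j * z)) := by
    refine HasSum.mul_left _ ?_
    refine hasSum_sum (fun j _ => hs (ω ^ j * z) ?_)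
    rw [mem_ball_zero_iff, hωabs j]
    exact hz1
  have hkey : ∀ k : ℕ, (n : ℂ)⁻¹ * ∑ j ∈ Finset.range n, a k * (ω ^ j * z) ^ k
      = if n ∣ k then a k * z ^ k else 0 := by
    intro k
    have heq : ∑ j ∈ Finset.range n, a k * (ω ^ j * z) ^ k
        = a k * z ^ k * ∑ j ∈ Finset.range n, (ω ^ k) ^ j := by
      rw [Finset.mul_sum]
      refine Finset.sum_congr rfl fun j _ => ?_
      rw [mul_pow, ← pow_mul, ← pow_mul, mul_comm j k, pow_mul]
      ring
    rw [heq]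
    by_cases hdvd : n ∣ k
    · rw [(hω.pow_eq_one_iff_dvd k).mpr hdvd]
      simp only [one_pow, Finset.sum_const, Finset.card_range, nsmul_eq_mul, mul_one, if_pos hdvd]
      field_simp
    · have hne : ω ^ k ≠ 1 := fun h => hdvd ((hω.pow_eq_one_iff_dvd k).mp h)
      rw [geom_sum_eq hne, ← pow_mul, mul_comm k n, pow_mul, hω.pow_eq_one]
      simp [hdvd]
  have hsum2 : HasSum (fun k : ℕ => if n ∣ k then a k * z ^ k else 0)
      ((n : ℂ)⁻¹ * ∑ j ∈ Finset.range n, f (ω ^ j * z)) := by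
    simpa only [hkey] using hsum
  have hinj : Function.Injective (fun m : ℕ => n * m) := fun x y h => by
    have : n * x = n * y := h
    exact Nat.eq_of_mul_eq_mul_left (by omega) this
  rw [← Function.Injective.hasSum_iff hinj (fun k hk => ?_)] at hsum2
  · refine hsum2.congr_fun ?_
    intro m
    simp only [Function.comp_apply, if_pos (Dvd.intro m rfl), pow_mul]
  · have : ¬ n ∣ k := fun ⟨m, hm⟩ => hk ⟨m, hm.symm⟩
    simp [this]

lemma bohr_coeff_bound (f : ℂ → ℂ) (a : ℕ → ℂ)
    (hs : ∀ z ∈ ball (0 : ℂ) 1, HasSum (fun k : ℕ => a k * z ^ k) (f z))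
    (hb : ∀ z ∈ ball (0 : ℂ) 1, ‖f z‖ ≤ 1) (n : ℕ) (hn : 1 ≤ n) :
    ‖a n‖ ≤ 1 - ‖a 0‖ ^ 2 := by
  have h0ball : (0 : ℂ) ∈ ball (0 : ℂ) 1 := by simp
  -- f 0 = a 0
  have hsum0 : HasSum (fun k : ℕ => a k * (0:ℂ) ^ k) (a 0) := by
    have : (fun k : ℕ => a k * (0:ℂ) ^ k) = fun k => if k = 0 then a 0 else 0 := by
      funext k; cases k <;> simp
    rw [this]
    exact hasSum_ite_eq 0 (a 0)
  have hf0 : f 0 = a 0 := ((hs 0 h0ball).unique hsum0)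
  have hA : ‖a 0‖ ≤ 1 := hf0 ▸ hb 0 h0ball
  -- the function h(w) = ∑ a_{nm} w^m
  set b : ℕ → ℂ := fun m => a (n * m) with hbdef
  set h : ℂ → ℂ := fun w => ∑' m : ℕ, b m * w ^ m with hhdef
  -- every w in ball has an n-th root in ball
  have hroot : ∀ w ∈ ball (0 : ℂ) 1, ∃ z ∈ ball (0 : ℂ) 1, z ^ n = w := by
    intro w hw
    rcases eq_or_ne w 0 with rfl | hw0
    · exact ⟨0, by simp, by simp [zero_pow (by omega : n ≠ 0)]⟩
    · refine ⟨Complex.exp (Complex.log w / n), ?_, ?_⟩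
      · rw [mem_ball_zero_iff]
        have hpow : ‖Complex.exp (Complex.log w / n)‖ ^ n = ‖w‖ := by
          rw [← norm_pow, ← Complex.exp_nat_mul]
          rw [mul_div_cancel₀ _ (Nat.cast_ne_zero.mpr (by omega : n ≠ 0) : (n:ℂ) ≠ 0)]
          rw [Complex.exp_log hw0]
        by_contra hc
        push_neg at hc
        have : (1:ℝ) ≤ ‖w‖ := by
          calc (1:ℝ) = 1 ^ n := (one_pow n).symm
          _ ≤ ‖Complex.exp (Complex.log w / n)‖ ^ n := by
              exact pow_le_pow_left₀ (by norm_num) hc n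
          _ = ‖w‖ := hpow
        have := mem_ball_zero_iff.mp hw
        linarith
      · rw [← Complex.exp_nat_mul,
          mul_div_cancel₀ _ (Nat.cast_ne_zero.mpr (by omega : n ≠ 0) : (n:ℂ) ≠ 0),
          Complex.exp_log hw0]
  -- h has the power series and is bounded
  have hsh : ∀ w ∈ ball (0 : ℂ) 1, HasSum (fun m : ℕ => b m * w ^ m) (h w) ∧ ‖h w‖ ≤ 1 := by
    intro w hw
    obtain ⟨z, hz, hzw⟩ := hroot w hw
    have havg := bohr_avg f a n hn hs z hz
    rw [hzw] at havg
    have htsum : h w = (n : ℂ)⁻¹ * ∑ j ∈ Finset.range n, f (Complex.exp (2 * Real.pi * I / n) ^ j * z) :=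
      havg.tsum_eq
    constructor
    · rw [htsum]; exact havg
    · rw [htsum]
      have habsω : ∀ j : ℕ, ‖Complex.exp (2 * Real.pi * I / n) ^ j * z‖ = ‖z‖ := by
        intro j
        have : ‖Complex.exp (2 * Real.pi * I / (n:ℕ))‖ = 1 := by
          rw [Complex.norm_exp]
          norm_num [Complex.div_re, Complex.mul_I_re]
        simp [norm_mul, this]
      calc ‖(n : ℂ)⁻¹ * ∑ j ∈ Finset.range n, f (Complex.exp (2 * Real.pi * I / n) ^ j * z)‖
          ≤ ‖(n : ℂ)⁻¹‖ * ∑ j ∈ Finset.range n, ‖f (Complex.exp (2 * Real.pi * I / n) ^ j * z)‖ := by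
            rw [norm_mul]
            gcongr
            exact norm_sum_le _ _
        _ ≤ ‖(n : ℂ)⁻¹‖ * ∑ j ∈ Finset.range n, 1 := by
            gcongr with j hj
            refine hb _ ?_
            rw [mem_ball_zero_iff, habsω j]
            simpa using hz
        _ = 1 := by
            simp only [Finset.sum_const, Finset.card_range, smul_eq_mul, mul_one]
            rw [norm_inv]
            simp [Complex.norm_natCast]
            rw [inv_mul_cancel₀]
            exact_mod_cast Nat.cast_ne_zero.mpr (by omega : n ≠ 0)
  have hps : HasFPowerSeriesOnBall h (FormalMultilinearSeries.ofScalars ℂ b) 0 1 :=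
    bohr_hfps h b (fun w hw => (hsh w hw).1)
  have hd0 : deriv h 0 = a n := by
    rw [hps.hasFPowerSeriesAt.deriv]
    show (FormalMultilinearSeries.ofScalars ℂ b).coeff 1 = a n
    rw [bohr_coeff]
    simp [hbdef]
  have hh0 : h 0 = a 0 := by
    have hsum0' : HasSum (fun m : ℕ => b m * (0:ℂ) ^ m) (b 0) := by
      have : (fun m : ℕ => b m * (0:ℂ) ^ m) = fun m => if m = 0 then b 0 else 0 := by
        funext m; cases m <;> simp
      rw [this]
      exact hasSum_ite_eq 0 (b 0)
    have := ((hsh 0 h0ball).1.unique hsum0')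
    rw [this, hbdef]
    simp
  -- differentiability of h on the ball
  have hball_eq : Metric.eball (0:ℂ) (1:ENNReal) = ball (0:ℂ) 1 := by
    rw [show (1:ENNReal) = ((1:NNReal):ENNReal) from rfl, Metric.eball_coe]
    norm_num
  have hdiff : DifferentiableOn ℂ h (ball (0:ℂ) 1) := by
    have := hps.analyticOnNhd.differentiableOn
    rwa [hball_eq] at this
  rcases lt_or_eq_of_le hA with hlt | heq1
  · -- Möbius + Schwarz case
    set t : ℂ := a 0 with htdef
    have hden : ∀ w ∈ ball (0:ℂ) 1, 1 - (starRingEnd ℂ) t * h w ≠ 0 := by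
      intro w hw hc
      have h1 : ‖(starRingEnd ℂ) t * h w‖ ≤ ‖t‖ := by
        rw [norm_mul, RCLike.norm_conj]
        calc ‖t‖ * ‖h w‖ ≤ ‖t‖ * 1 := by
              gcongr
              exact (hsh w hw).2
          _ = ‖t‖ := mul_one _
      have h2 : (starRingEnd ℂ) t * h w = 1 := by linear_combination -hc
      rw [h2] at h1
      simp at h1
      exact absurd h1 (not_le.mpr hlt)
    set G : ℂ → ℂ := fun w => (h w - t) / (1 - (starRingEnd ℂ) t * h w) with hGdef
    have hG0 : G 0 = 0 := by
      rw [hGdef]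
      simp [hh0]
    have hGd : DifferentiableOn ℂ G (ball (0:ℂ) 1) := by
      refine DifferentiableOn.div ?_ ?_ hden
      · exact hdiff.sub_const t
      · exact (differentiableOn_const _).sub ((differentiableOn_const _).mul hdiff)
    have hGb : ∀ w ∈ ball (0:ℂ) 1, ‖G w‖ ≤ 1 := by
      intro w hw
      rw [hGdef]
      simp only [norm_div]
      rw [div_le_one (norm_pos_iff.mpr (hden w hw))]
      exact bohr_mobius_norm t (h w) hA (hsh w hw).2
    -- derivative of G at 0
    have hdh : HasDerivAt h (a n) 0 := by
      have := hps.hasFPowerSeriesAt.differentiableAt.hasDerivAt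
      rwa [hd0] at this
    have hdenne : (1 : ℂ) - (starRingEnd ℂ) t * t ≠ 0 := by
      have := hden 0 h0ball
      rwa [hh0] at this
    have hdG : HasDerivAt G (a n / (1 - (starRingEnd ℂ) t * t)) 0 := by
      have hnum : HasDerivAt (fun w => h w - t) (a n) 0 := hdh.sub_const t
      have hden' : HasDerivAt (fun w => 1 - (starRingEnd ℂ) t * h w)
          (-((starRingEnd ℂ) t * a n)) 0 := by
        have := (hdh.const_mul ((starRingEnd ℂ) t)).const_sub 1
        simpa using this
      have := hnum.div hden' (by rwa [hh0])
      rw [hh0] at this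
      have heq2 : (a n * (1 - (starRingEnd ℂ) t * t) - (t - t) * -((starRingEnd ℂ) t * a n))
          / (1 - (starRingEnd ℂ) t * t) ^ 2 = a n / (1 - (starRingEnd ℂ) t * t) := by
        rw [sub_self, zero_mul, sub_zero, sq, ← div_div, mul_div_assoc, div_self hdenne,
          mul_one]
      rw [heq2] at this
      exact this
    have hderivG : deriv G 0 = a n / (1 - (starRingEnd ℂ) t * t) := hdG.deriv
    -- Schwarz estimate
    have hschwarz : ‖deriv G 0‖ ≤ 1 := by
      by_contra hc
      push_neg at hc
      set R : ℝ := (1 + ‖deriv G 0‖) / 2 with hR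
      have hR1 : 1 < R := by rw [hR]; linarith
      have hmaps : Set.MapsTo G (ball (0:ℂ) 1) (ball (G 0) R) := by
        intro w hw
        rw [hG0, mem_ball_zero_iff]
        exact lt_of_le_of_lt (hGb w hw) hR1
      have := Complex.norm_deriv_le_div_of_mapsTo_ball hGd (hmaps.mono_right ball_subset_closedBall) one_pos
      rw [div_one] at this
      rw [hR] at this
      linarith
    -- conclude
    have hconj : (1 : ℂ) - (starRingEnd ℂ) t * t = ((1 - ‖t‖^2 : ℝ) : ℂ) := by
      rw [mul_comm, Complex.mul_conj, Complex.normSq_eq_norm_sq]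
      push_cast
      ring
    have hnorm_den : ‖(1 : ℂ) - (starRingEnd ℂ) t * t‖ = 1 - ‖t‖^2 := by
      rw [hconj, Complex.norm_real, Real.norm_eq_abs, _root_.abs_of_nonneg]
      nlinarith [norm_nonneg t]
    have hne : (1:ℝ) - ‖t‖^2 ≠ 0 := ne_of_gt (by nlinarith [norm_nonneg t])
    have hkey2 : ‖a n‖ = ‖deriv G 0‖ * (1 - ‖t‖^2) := by
      rw [hderivG, norm_div, hnorm_den, div_mul_cancel₀ _ hne]
    have hpos2 : (0:ℝ) ≤ 1 - ‖t‖^2 := by nlinarith [norm_nonneg t]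
    calc ‖a n‖ = ‖deriv G 0‖ * (1 - ‖t‖^2) := hkey2
      _ ≤ 1 * (1 - ‖t‖^2) := by gcongr
      _ = 1 - ‖t‖^2 := one_mul _
  · -- maximum modulus case: h is constant
    have hmax : IsMaxOn (norm ∘ h) (ball (0:ℂ) 1) 0 := by
      intro w hw
      simp only [Function.comp_apply, Set.mem_setOf_eq, hh0, heq1]
      exact (hsh w hw).2
    have heqOn := Complex.eqOn_of_isPreconnected_of_isMaxOn_norm
      (convex_ball (0:ℂ) 1).isPreconnected isOpen_ball hdiff h0ball hmax
    have hev : h =ᶠ[nhds (0:ℂ)] fun _ => h 0 := by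
      refine Filter.eventuallyEq_of_mem (isOpen_ball.mem_nhds h0ball) ?_
      intro w hw
      exact heqOn hw
    have : deriv h 0 = 0 := by
      rw [hev.deriv_eq]
      simp
    rw [hd0] at this
    rw [this, norm_zero, heq1]
    norm_num

lemma bohr_part1 (f : ℂ → ℂ) (a : ℕ → ℂ)
    (hs : ∀ z ∈ ball (0 : ℂ) 1, HasSum (fun n : ℕ => a n * z ^ n) (f z))
    (hb : ∀ z ∈ ball (0 : ℂ) 1, ‖f z‖ ≤ 1)
    (r : ℝ) (hr0 : 0 ≤ r) (hr13 : r ≤ 1 / 3) :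
    ∑' n : ℕ, ‖a n‖ * r ^ n ≤ 1 := by
  have hr1 : r < 1 := by linarith
  have h0ball : (0 : ℂ) ∈ ball (0 : ℂ) 1 := by simp
  have hsum0 : HasSum (fun k : ℕ => a k * (0:ℂ) ^ k) (a 0) := by
    have : (fun k : ℕ => a k * (0:ℂ) ^ k) = fun k => if k = 0 then a 0 else 0 := by
      funext k; cases k <;> simp
    rw [this]; exact hasSum_ite_eq 0 (a 0)
  have hA : ‖a 0‖ ≤ 1 := (hs 0 h0ball).unique hsum0 ▸ hb 0 h0ball
  set t : ℝ := ‖a 0‖ with htdef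
  have ht0 : 0 ≤ t := norm_nonneg _
  have hbound : ∀ n : ℕ, 1 ≤ n → ‖a n‖ ≤ 1 - t ^ 2 :=
    fun n hn => bohr_coeff_bound f a hs hb n hn
  have ht2 : 0 ≤ 1 - t ^ 2 := by nlinarith
  -- summability
  have hgeo : Summable (fun n : ℕ => r ^ n) := summable_geometric_of_lt_one hr0 hr1
  have hle : ∀ n : ℕ, ‖a n‖ * r ^ n ≤ r ^ n := by
    intro n
    rcases Nat.eq_zero_or_pos n with rfl | hn
    · simpa using hA
    · have := hbound n hn
      have hrn : (0:ℝ) ≤ r ^ n := pow_nonneg hr0 n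
      nlinarith [norm_nonneg (a n)]
  have hg : Summable (fun n : ℕ => ‖a n‖ * r ^ n) :=
    Summable.of_nonneg_of_le (fun n => mul_nonneg (norm_nonneg _) (pow_nonneg hr0 n)) hle hgeo
  have hmaj : Summable (fun n : ℕ => (1 - t ^ 2) * r ^ (n + 1)) := by
    have : (fun n : ℕ => (1 - t ^ 2) * r ^ (n + 1)) = fun n => ((1 - t ^ 2) * r) * r ^ n := by
      funext n; ring
    rw [this]; exact hgeo.mul_left _
  have hg1 : Summable (fun n : ℕ => ‖a (n + 1)‖ * r ^ (n + 1)) :=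
    (summable_nat_add_iff (f := fun n : ℕ => ‖a n‖ * r ^ n) 1).2 hg
  have htail : ∑' n : ℕ, ‖a (n + 1)‖ * r ^ (n + 1) ≤ ∑' n : ℕ, (1 - t ^ 2) * r ^ (n + 1) := by
    refine Summable.tsum_le_tsum (fun n => ?_) hg1 hmaj
    have hrn : (0:ℝ) ≤ r ^ (n + 1) := pow_nonneg hr0 _
    exact mul_le_mul_of_nonneg_right (hbound (n+1) (by omega)) hrn
  have htailval : ∑' n : ℕ, (1 - t ^ 2) * r ^ (n + 1) = (1 - t ^ 2) * r * (1 - r)⁻¹ := by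
    have : (fun n : ℕ => (1 - t ^ 2) * r ^ (n + 1)) = fun n => ((1 - t ^ 2) * r) * r ^ n := by
      funext n; ring
    rw [this, tsum_mul_left, tsum_geometric_of_lt_one hr0 hr1]
  have hsplit : ∑' n : ℕ, ‖a n‖ * r ^ n
      = t + ∑' n : ℕ, ‖a (n + 1)‖ * r ^ (n + 1) := by
    rw [Summable.tsum_eq_zero_add hg]
    simp [htdef]
  rw [hsplit]
  have hfrac : r * (1 - r)⁻¹ ≤ 1 / 2 := by
    rw [mul_inv_le_iff₀ (by linarith : (0:ℝ) < 1 - r)]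
    linarith
  have : ∑' n : ℕ, ‖a (n + 1)‖ * r ^ (n + 1) ≤ (1 - t ^ 2) * (1/2) := by
    refine htail.trans ?_
    rw [htailval, mul_assoc]
    exact mul_le_mul_of_nonneg_left hfrac ht2
  nlinarith [sq_nonneg (1 - t)]

lemma bohr_part2 (r : ℝ) (hr13 : 1 / 3 < r) (hr1 : r < 1) :
    ∃ (f : ℂ → ℂ) (a : ℕ → ℂ),
      (∀ z ∈ ball (0 : ℂ) 1, HasSum (fun n : ℕ => a n * z ^ n) (f z))
      ∧ (∀ z ∈ ball (0 : ℂ) 1, ‖f z‖ ≤ 1)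
      ∧ 1 < ∑' n : ℕ, ‖a n‖ * r ^ n := by
  have hr0 : 0 < r := by linarith
  set s : ℝ := ((1 - r) / (2 * r) + 1) / 2 with hsdef
  have hfrac1 : (1 - r) / (2 * r) < 1 := by
    rw [div_lt_one (by linarith)]
    linarith
  have hfrac0 : 0 < (1 - r) / (2 * r) := div_pos (by linarith) (by linarith)
  have hs0 : 0 < s := by rw [hsdef]; linarith
  have hs1 : s < 1 := by rw [hsdef]; linarith
  have hs2 : 1 < r * (1 + 2 * s) := by
    have : (1 - r) / (2 * r) < s := by rw [hsdef]; linarith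
    have h := (div_lt_iff₀ (by linarith : (0:ℝ) < 2 * r)).mp this
    nlinarith
  set c : ℂ := (s : ℂ) with hcdef
  have hcnorm : ‖c‖ = s := by
    rw [hcdef, Complex.norm_real, Real.norm_eq_abs, abs_of_pos hs0]
  refine ⟨fun z => (c - z) / (1 - c * z),
    fun n => if n = 0 then c else c ^ (n + 1) - c ^ (n - 1), ?_, ?_, ?_⟩
  · -- HasSum
    intro z hz
    have hz1 : ‖z‖ < 1 := mem_ball_zero_iff.mp hz
    have hcz : ‖c * z‖ < 1 := by
      rw [norm_mul, hcnorm]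
      nlinarith [norm_nonneg z]
    have hden : (1 : ℂ) - c * z ≠ 0 := by
      intro hcon
      have : c * z = 1 := by linear_combination -hcon
      rw [this] at hcz
      simp at hcz
    have geo : HasSum (fun n : ℕ => (c * z) ^ n) ((1 - c * z)⁻¹) :=
      hasSum_geometric_of_norm_lt_one hcz
    have h1 : HasSum (fun n : ℕ => c * (c * z) ^ n) (c * (1 - c * z)⁻¹) := geo.mul_left c
    have h2 : HasSum (fun n : ℕ => z * (c * z) ^ n) (z * (1 - c * z)⁻¹) := geo.mul_left z
    have h3 : HasSum (fun n : ℕ => if n = 0 then 0 else z * (c * z) ^ (n - 1))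
        (z * (1 - c * z)⁻¹) := by
      rw [← Function.Injective.hasSum_iff (f := fun n : ℕ => if n = 0 then 0
          else z * (c * z) ^ (n - 1)) Nat.succ_injective (fun k hk => ?_)]
      · refine h2.congr_fun ?_
        intro m
        simp [Nat.succ_ne_zero]
      · have : k = 0 := by
          by_contra hk0
          exact hk ⟨k - 1, by omega⟩
        simp [this]
    have h4 := h1.sub h3
    have heq : (fun n : ℕ => (if n = 0 then c else c ^ (n + 1) - c ^ (n - 1)) * z ^ n)
        = fun n : ℕ => c * (c * z) ^ n - if n = 0 then 0 else z * (c * z) ^ (n - 1) := by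
      funext n
      cases n with
      | zero => simp
      | succ m =>
        simp only [Nat.succ_ne_zero, if_false, Nat.add_sub_cancel]
        rw [mul_pow, mul_pow]
        ring
    rw [heq]
    have heq2 : (c - z) / (1 - c * z) = c * (1 - c * z)⁻¹ - z * (1 - c * z)⁻¹ := by
      field_simp
    show HasSum _ ((c - z) / (1 - c * z))
    rw [heq2]
    exact h4
  · -- norm bound
    intro z hz
    have hz1 : ‖z‖ < 1 := mem_ball_zero_iff.mp hz
    have hcz : ‖c * z‖ < 1 := by
      rw [norm_mul, hcnorm]
      nlinarith [norm_nonneg z]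
    have hden : (1 : ℂ) - c * z ≠ 0 := by
      intro hcon
      have : c * z = 1 := by linear_combination -hcon
      rw [this] at hcz
      simp at hcz
    rw [norm_div, div_le_one (norm_pos_iff.mpr hden)]
    have := bohr_mobius_norm c z (by rw [hcnorm]; linarith) (le_of_lt hz1)
    rw [norm_sub_rev]
    rwa [hcdef, Complex.conj_ofReal, ← hcdef] at this
  · -- the sum exceeds 1
    have hsr : s * r < 1 := by nlinarith
    have hterm : ∀ m : ℕ, ‖(if (m+1) = 0 then c else c ^ (m + 2) - c ^ m)‖ * r ^ (m+1)
        = ((1 - s^2) * r) * (s * r) ^ m := by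
      intro m
      simp only [Nat.succ_ne_zero, if_false]
      have : c ^ (m + 2) - c ^ m = ((s ^ m * (s^2 - 1) : ℝ) : ℂ) := by
        rw [hcdef]
        push_cast
        ring
      have hnp : s ^ m * (s^2 - 1) ≤ 0 :=
        mul_nonpos_of_nonneg_of_nonpos (pow_nonneg hs0.le m) (by nlinarith)
      rw [this, Complex.norm_real, Real.norm_eq_abs, abs_of_nonpos hnp]
      rw [mul_pow]
      ring
    have hgeo2 : Summable (fun m : ℕ => ((1 - s^2) * r) * (s * r) ^ m) :=
      (summable_geometric_of_lt_one (by positivity) hsr).mul_left _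
    have hsum_shift : Summable (fun m : ℕ =>
        ‖(if (m+1) = 0 then c else c ^ (m + 2) - c ^ m)‖ * r ^ (m+1)) := by
      refine hgeo2.congr ?_
      intro m
      rw [hterm m]
    have hg : Summable (fun n : ℕ => ‖(if n = 0 then c else c ^ (n + 1) - c ^ (n - 1))‖ * r ^ n) := by
      refine (summable_nat_add_iff (f := fun n : ℕ =>
        ‖(if n = 0 then c else c ^ (n + 1) - c ^ (n - 1))‖ * r ^ n) 1).mp ?_
      refine hsum_shift.congr ?_
      intro m
      norm_num
    rw [Summable.tsum_eq_zero_add hg]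
    have htsum_tail : ∑' m : ℕ, ‖(if (m+1) = 0 then c else c ^ (m+1+1) - c ^ (m+1-1))‖ * r ^ (m+1)
        = (1 - s^2) * r * (1 - s*r)⁻¹ := by
      have : (fun m : ℕ => ‖(if (m+1) = 0 then c else c ^ (m+1+1) - c ^ (m+1-1))‖ * r ^ (m+1))
          = fun m => ((1 - s^2) * r) * (s * r) ^ m := by
        funext m
        have := hterm m
        norm_num at this ⊢
        convert this using 3 <;> omega
      rw [this, tsum_mul_left, tsum_geometric_of_lt_one (by positivity) hsr]
    rw [htsum_tail]
    have hif : ‖if (0:ℕ) = 0 then c else c ^ (0 + 1) - c ^ (0 - 1)‖ * r ^ 0 = s := by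
      rw [if_pos rfl, pow_zero, mul_one, hcnorm]
    rw [hif]
    -- final inequality: 1 < s + (1-s^2) * r * (1-s*r)⁻¹
    have hD : 0 < 1 - s * r := by linarith
    have hu : 0 < (1 - s * r)⁻¹ := inv_pos.mpr hD
    have h5 : (1:ℝ) - s * r < (1 + s) * r := by nlinarith
    have h6 : (1:ℝ) < (1 + s) * r * (1 - s*r)⁻¹ := by
      have := mul_lt_mul_of_pos_right h5 hu
      rwa [mul_inv_cancel₀ (ne_of_gt hD)] at this
    have h7 : (1 - s^2) * r * (1 - s*r)⁻¹ = (1 - s) * ((1 + s) * r * (1 - s*r)⁻¹) := by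
      ring
    nlinarith [h6, hs1]

theorem stmt_2 :
    (∀ (f : ℂ → ℂ) (a : ℕ → ℂ),
        (∀ z ∈ ball (0 : ℂ) 1, HasSum (fun n : ℕ => a n * z ^ n) (f z)) →
        (∀ z ∈ ball (0 : ℂ) 1, ‖f z‖ ≤ 1) →
        ∀ r : ℝ, 0 ≤ r → r ≤ 1 / 3 → ∑' n : ℕ, ‖a n‖ * r ^ n ≤ 1)
    ∧ ∀ r : ℝ, 1 / 3 < r → r < 1 →
        ∃ (f : ℂ → ℂ) (a : ℕ → ℂ),
          (∀ z ∈ ball (0 : ℂ) 1, HasSum (fun n : ℕ => a n * z ^ n) (f z))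
          ∧ (∀ z ∈ ball (0 : ℂ) 1, ‖f z‖ ≤ 1)
          ∧ 1 < ∑' n : ℕ, ‖a n‖ * r ^ n := by
  exact ⟨fun f a hs hb r hr0 hr13 => bohr_part1 f a hs hb r hr0 hr13,
    fun r h1 h2 => bohr_part2 r h1 h2⟩
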